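/- For every natural number n ≥ 2 and every real s ≥ 1, the quantity B(n,s) := ∑_{k=1}^{n} (1/n)·(1 − k/n)^s satisfies B(n,s) ≥ ((n−1)/(2n))^s. -/

import Mathlib

theorem stmt_0 (n : ℕ) (hn : 2 ≤ n) (s : ℝ) (hs : 1 ≤ s) :
    ∑ k ∈ Finset.Icc 1 n, (1 / (n : ℝ)) * (1 - (k : ℝ) / n) ^ s ≥
      (((n : ℝ) - 1) / (2 * n)) ^ s := by
  have hn0 : (0:ℝ) < n := by positivity
  have hcard : (Finset.Icc 1 n).card = n := by simp
  have hw : ∑ k ∈ Finset.Icc 1 n, (1 / (n:ℝ)) = 1 := by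
    rw [Finset.sum_const, hcard, nsmul_eq_mul]; field_simp
  have key := Real.rpow_arith_mean_le_arith_mean_rpow (Finset.Icc 1 n)
    (fun _ => 1 / (n:ℝ)) (fun k => 1 - (k:ℝ)/n)
    (fun i _ => by positivity) hw
    (fun k hk => by
      have hkn : k ≤ n := (Finset.mem_Icc.mp hk).2
      have h1 : (k:ℝ) ≤ n := by exact_mod_cast hkn
      have h2 := div_le_one_of_le₀ h1 hn0.le
      linarith) hs
  have hkcast : ∀ m : ℕ, ∑ k ∈ Finset.Icc 1 m, (k:ℝ) = m*(m+1)/2 := by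
    intro m; induction m with
    | zero => simp
    | succ m ih => rw [Finset.sum_Icc_succ_top (by omega)]; push_cast [ih]; ring
  have hsum : ∑ k ∈ Finset.Icc 1 n, (1 / (n:ℝ)) * (1 - (k:ℝ)/n)
      = ((n:ℝ) - 1) / (2 * n) := by
    have hterm : ∀ k ∈ Finset.Icc 1 n,
        (1/(n:ℝ))*(1-(k:ℝ)/n) = 1/(n:ℝ) - (k:ℝ)*(1/(n:ℝ)^2) := by
      intro k _; field_simp
    rw [Finset.sum_congr rfl hterm, Finset.sum_sub_distrib, Finset.sum_const, hcard,
      ← Finset.sum_mul, hkcast n]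
    rw [nsmul_eq_mul]; field_simp; ring
  rw [hsum] at key
  exact key
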